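/- Σ_{k≥0} (k + 1 - 3⌊k/6⌋)(⌊k/6⌋ + 1) / ((k+1)(k+2)(k+6)(k+7)) = 7π/(360√3). -/

import Mathlib

open Real MeasureTheory intervalIntegral Filter Topology

lemma sqrt3_pos : (0:ℝ) < Real.sqrt 3 := Real.sqrt_pos.mpr (by norm_num)
lemma sqrt3_sq : Real.sqrt 3 ^ 2 = 3 := Real.sq_sqrt (by norm_num)

lemma arctan_sqrt3 : Real.arctan (Real.sqrt 3) = π / 3 := by
  rw [← Real.tan_pi_div_three, Real.arctan_tan] <;> nlinarith [Real.pi_pos]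

lemma arctan_inv_sqrt3 : Real.arctan (1 / Real.sqrt 3) = π / 6 := by
  have h : Real.tan (π/6) = 1 / Real.sqrt 3 := by
    rw [Real.tan_eq_sin_div_cos, Real.sin_pi_div_six, Real.cos_pi_div_six]
    rw [div_div_div_cancel_right₀]
    norm_num
  rw [← h, Real.arctan_tan] <;> nlinarith [Real.pi_pos]

lemma int_inv_sq_add (d a b : ℝ) (hd : 0 < d) :
    ∫ x in a..b, 1 / (x ^ 2 + d ^ 2) =
      (1 / d) * (Real.arctan (b / d) - Real.arctan (a / d)) := by
  have h : ∀ x : ℝ, 1 / (x ^ 2 + d ^ 2) = (1/d^2) * (1 / (1 + (x / d) ^ 2)) := by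
    intro x
    have h1 : x ^ 2 + d ^ 2 > 0 := by positivity
    field_simp
    ring
  simp only [h]
  rw [intervalIntegral.integral_const_mul,
    intervalIntegral.integral_comp_div (fun x => 1 / (1 + x ^ 2)) hd.ne',
    integral_one_div_one_add_sq]
  field_simp
  ring

lemma int_quad (c a b : ℝ) :
    ∫ x in a..b, 1 / ((x + c) ^ 2 + 3/4) =
      (2 / Real.sqrt 3) *
        (Real.arctan ((b + c) / (Real.sqrt 3 / 2)) - Real.arctan ((a + c) / (Real.sqrt 3 / 2))) := by
  have hd : (0:ℝ) < Real.sqrt 3 / 2 := by positivity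
  have h34 : (3:ℝ)/4 = (Real.sqrt 3 / 2) ^ 2 := by
    rw [div_pow, sqrt3_sq]; norm_num
  rw [intervalIntegral.integral_comp_add_right (fun x => 1 / (x ^ 2 + 3/4)) c]
  simp only [h34]
  rw [int_inv_sq_add _ _ _ hd]
  rw [div_div_eq_mul_div]
  norm_num

lemma I1 : ∫ x in (0:ℝ)..1, 1 / (x ^ 2 + x + 1) = π / (3 * Real.sqrt 3) := by
  have h : ∀ x : ℝ, 1 / (x ^ 2 + x + 1) = 1 / ((x + 1/2) ^ 2 + 3/4) := by
    intro x; ring_nf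
  simp only [h]
  rw [int_quad]
  have e1 : ((1:ℝ) + 1/2) / (Real.sqrt 3 / 2) = Real.sqrt 3 := by
    rw [div_eq_iff (by positivity : Real.sqrt 3 / 2 ≠ 0)]
    nlinarith [sqrt3_sq]
  have e2 : ((0:ℝ) + 1/2) / (Real.sqrt 3 / 2) = 1 / Real.sqrt 3 := by
    rw [div_eq_div_iff (by positivity) sqrt3_pos.ne']
    nlinarith [sqrt3_sq]
  rw [e1, e2, arctan_sqrt3, arctan_inv_sqrt3]
  field_simp
  ring_nf

lemma I2 : ∫ x in (0:ℝ)..1, 1 / (x ^ 2 - x + 1) = 2 * π / (3 * Real.sqrt 3) := by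
  have h : ∀ x : ℝ, 1 / (x ^ 2 - x + 1) = 1 / ((x + -(1/2)) ^ 2 + 3/4) := by
    intro x; ring_nf
  simp only [h]
  rw [int_quad]
  have e1 : ((1:ℝ) + -(1/2)) / (Real.sqrt 3 / 2) = 1 / Real.sqrt 3 := by
    rw [div_eq_div_iff (by positivity) sqrt3_pos.ne']
    nlinarith [sqrt3_sq]
  have e2 : ((0:ℝ) + -(1/2)) / (Real.sqrt 3 / 2) = -(1 / Real.sqrt 3) := by
    rw [div_eq_iff (by positivity : Real.sqrt 3 / 2 ≠ 0)]
    field_simp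
    norm_num
  rw [e1, e2, Real.arctan_neg, arctan_inv_sqrt3]
  field_simp
  ring_nf


lemma prog_hasSum (p a b : ℕ) (hab : a < b) (hbp : b < p) :
    HasSum (fun m : ℕ => 1/((p:ℝ)*m+a+1) - 1/((p:ℝ)*m+b+1))
      (∫ x in Set.Ioo (0:ℝ) 1, ((x^a - x^b)/(1 - x^p))) := by
  have hp : 0 < p := by omega
  set μ := volume.restrict (Set.Ioo (0:ℝ) 1) with hμ
  set F : ℕ → ℝ → ℝ := fun m x => x^(p*m+a) - x^(p*m+b) with hF
  have hcont : ∀ m, Continuous (F m) := fun m => (continuous_pow _).sub (continuous_pow _)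
  have hint : ∀ m, Integrable (F m) μ := fun m =>
    ((hcont m).integrableOn_Icc (a := 0) (b := 1)).mono_set Set.Ioo_subset_Icc_self
  have hval : ∀ m, ∫ x, F m x ∂μ = 1/((p:ℝ)*m+a+1) - 1/((p:ℝ)*m+b+1) := by
    intro m
    rw [hμ, ← MeasureTheory.integral_Ioc_eq_integral_Ioo,
      ← intervalIntegral.integral_of_le (zero_le_one)]
    rw [hF]
    simp only
    rw [intervalIntegral.integral_sub (intervalIntegrable_pow _) (intervalIntegrable_pow _),
      integral_pow, integral_pow]
    push_cast
    norm_num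
  have hnorm : ∀ m, ∫ x, ‖F m x‖ ∂μ = ∫ x, F m x ∂μ := by
    intro m
    apply MeasureTheory.integral_congr_ae
    rw [Filter.EventuallyEq, MeasureTheory.ae_restrict_iff' measurableSet_Ioo]
    filter_upwards with x hx
    have h1 : x ^ (p*m+b) ≤ x ^ (p*m+a) :=
      pow_le_pow_of_le_one hx.1.le hx.2.le (by omega)
    rw [Real.norm_of_nonneg (sub_nonneg.mpr h1)]
  have hsum : Summable fun m => ∫ x, ‖F m x‖ ∂μ := by
    have h0 : Summable (fun n : ℕ => 1/((n:ℝ))^2) :=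
      summable_one_div_nat_pow.mpr (by norm_num)
    have base : Summable fun m : ℕ => ((b:ℝ)+1) / ((m:ℝ)+1)^2 := by
      have h1 : Summable fun m : ℕ => 1 / ((m:ℝ)+1)^2 :=
        Summable.congr ((summable_nat_add_iff 1).mpr h0) (by intro n; push_cast; ring)
      exact (h1.mul_left ((b:ℝ)+1)).congr (fun n => by rw [mul_one_div])
    apply Summable.of_nonneg_of_le _ _ base
    · intro m
      rw [hnorm, hval]
      have h1 : (0:ℝ) < (p:ℝ)*m+a+1 := by positivity
      have h2 : (0:ℝ) < (p:ℝ)*m+b+1 := by positivity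
      rw [sub_nonneg, div_le_div_iff₀ h2 h1]
      have : (a:ℝ) ≤ b := by exact_mod_cast hab.le
      linarith
    · intro m
      rw [hnorm, hval]
      have h1 : (0:ℝ) < (p:ℝ)*m+a+1 := by positivity
      have h2 : (0:ℝ) < (p:ℝ)*m+b+1 := by positivity
      have hpm : (1:ℝ) ≤ (p:ℝ) := by exact_mod_cast hp
      have hm : (0:ℝ) ≤ (m:ℝ) := Nat.cast_nonneg m
      have e : 1/((p:ℝ)*m+a+1) - 1/((p:ℝ)*m+b+1) = ((b:ℝ)-a)/(((p:ℝ)*m+a+1)*((p:ℝ)*m+b+1)) := by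
        field_simp
        ring
      rw [e]
      have hA : (m:ℝ)+1 ≤ (p:ℝ)*m+a+1 := by nlinarith [Nat.cast_nonneg (α := ℝ) a]
      have hB : (m:ℝ)+1 ≤ (p:ℝ)*m+b+1 := by nlinarith [Nat.cast_nonneg (α := ℝ) b]
      have hprod : ((m:ℝ)+1)^2 ≤ ((p:ℝ)*m+a+1)*((p:ℝ)*m+b+1) := by
        rw [sq]
        exact mul_le_mul hA hB (by positivity) (by positivity)
      apply div_le_div₀ (by positivity) (by linarith [Nat.cast_nonneg (α := ℝ) a]) (by positivity)
        hprod
  have hptsum : ∀ᵐ x ∂μ, (∑' m, F m x) = (x^a - x^b)/(1 - x^p) := by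
    rw [hμ, MeasureTheory.ae_restrict_iff' measurableSet_Ioo]
    filter_upwards with x hx
    have hxp : x ^ p < 1 := pow_lt_one₀ hx.1.le hx.2 hp.ne'
    have hg : HasSum (fun m => (x^p)^m * (x^a - x^b)) ((1 - x^p)⁻¹ * (x^a - x^b)) :=
      (hasSum_geometric_of_lt_one (pow_nonneg hx.1.le p) hxp).mul_right _
    have heq : ∀ m, F m x = (x^p)^m * (x^a - x^b) := by
      intro m
      rw [hF]
      simp only
      rw [pow_add, pow_add, pow_mul]
      ring
    calc ∑' m, F m x = ∑' m, (x^p)^m * (x^a - x^b) := tsum_congr heq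
      _ = (1 - x^p)⁻¹ * (x^a - x^b) := hg.tsum_eq
      _ = (x^a - x^b)/(1 - x^p) := (div_eq_inv_mul _ _).symm
  have hmain := MeasureTheory.hasSum_integral_of_summable_integral_norm hint hsum
  rw [MeasureTheory.integral_congr_ae hptsum] at hmain
  exact hmain.congr_fun fun m => (hval m).symm


noncomputable def Tr (x : ℝ) : ℝ :=
  (-7/360) * (1/(6*x+1)) + (1/180) * (1/(6*x+2)) + (1/80) * (1/(6*x+3))
    + (1/45) * (1/(6*x+4)) + (5/144) * (1/(6*x+5))

set_option maxHeartbeats 4000000 in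
lemma ratid (x : ℝ) (hx : 0 ≤ x) :
    (3*x+0+1)*(x+1)/((6*x+0+1)*(6*x+0+2)*(6*x+0+6)*(6*x+0+7))
    + (3*x+1+1)*(x+1)/((6*x+1+1)*(6*x+1+2)*(6*x+1+6)*(6*x+1+7))
    + (3*x+2+1)*(x+1)/((6*x+2+1)*(6*x+2+2)*(6*x+2+6)*(6*x+2+7))
    + (3*x+3+1)*(x+1)/((6*x+3+1)*(6*x+3+2)*(6*x+3+6)*(6*x+3+7))
    + (3*x+4+1)*(x+1)/((6*x+4+1)*(6*x+4+2)*(6*x+4+6)*(6*x+4+7))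
    + (3*x+5+1)*(x+1)/((6*x+5+1)*(6*x+5+2)*(6*x+5+6)*(6*x+5+7))
    = (2/15) * (1/((6*x+1)*(6*x+5))) + ((1/30) * (1/((6*x+2)*(6*x+4)))
      + (Tr x - Tr (x+1))) := by
  unfold Tr
  have h1 : 6*x+1 ≠ 0 := by positivity
  have h2 : 6*x+2 ≠ 0 := by positivity
  have h3 : 6*x+3 ≠ 0 := by positivity
  have h4 : 6*x+4 ≠ 0 := by positivity
  have h5 : 6*x+5 ≠ 0 := by positivity
  have h6 : 6*x+6 ≠ 0 := by positivity
  have h7 : 6*x+7 ≠ 0 := by positivity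
  have h8 : 6*x+8 ≠ 0 := by positivity
  have h9 : 6*x+9 ≠ 0 := by positivity
  have h10 : 6*x+10 ≠ 0 := by positivity
  have h11 : 6*x+11 ≠ 0 := by positivity
  have h12 : 6*x+12 ≠ 0 := by positivity
  have h13 : 6*x+13 ≠ 0 := by positivity
  have hr0 : (3*x+0+1)*(x+1)/((6*x+0+1)*(6*x+0+2)*(6*x+0+6)*(6*x+0+7)) = (1/72)*(1/(6*x+1)) + (0/1)*(1/(6*x+2)) + (0/1)*(1/(6*x+6)) + (-1/72)*(1/(6*x+7)) := by
    field_simp; ring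
  have hr1 : (3*x+1+1)*(x+1)/((6*x+1+1)*(6*x+1+2)*(6*x+1+6)*(6*x+1+7)) = (1/45)*(1/(6*x+2)) + (-1/80)*(1/(6*x+3)) + (1/80)*(1/(6*x+7)) + (-1/45)*(1/(6*x+8)) := by
    field_simp; ring
  have hr2 : (3*x+2+1)*(x+1)/((6*x+2+1)*(6*x+2+2)*(6*x+2+6)*(6*x+2+7)) = (1/40)*(1/(6*x+3)) + (-1/60)*(1/(6*x+4)) + (1/60)*(1/(6*x+8)) + (-1/40)*(1/(6*x+9)) := by
    field_simp; ring
  have hr3 : (3*x+3+1)*(x+1)/((6*x+3+1)*(6*x+3+2)*(6*x+3+6)*(6*x+3+7)) = (1/45)*(1/(6*x+4)) + (-1/80)*(1/(6*x+5)) + (1/80)*(1/(6*x+9)) + (-1/45)*(1/(6*x+10)) := by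
    field_simp; ring
  have hr4 : (3*x+4+1)*(x+1)/((6*x+4+1)*(6*x+4+2)*(6*x+4+6)*(6*x+4+7)) = (1/72)*(1/(6*x+5)) + (0/1)*(1/(6*x+6)) + (0/1)*(1/(6*x+10)) + (-1/72)*(1/(6*x+11)) := by
    field_simp; ring
  have hr5 : (3*x+5+1)*(x+1)/((6*x+5+1)*(6*x+5+2)*(6*x+5+6)*(6*x+5+7)) = (0/1)*(1/(6*x+6)) + (1/48)*(1/(6*x+7)) + (-1/48)*(1/(6*x+11)) + (0/1)*(1/(6*x+12)) := by
    field_simp; ring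
  have hg1 : (2/15) * (1/((6*x+1)*(6*x+5))) = (1/30)*(1/(6*x+1)) + (-1/30)*(1/(6*x+5)) := by
    field_simp; ring
  have hg2 : (1/30) * (1/((6*x+2)*(6*x+4))) = (1/60)*(1/(6*x+2)) + (-1/60)*(1/(6*x+4)) := by
    field_simp; ring
  have e1 : 6*(x+1)+1 = 6*x+7 := by ring
  have e2 : 6*(x+1)+2 = 6*x+8 := by ring
  have e3 : 6*(x+1)+3 = 6*x+9 := by ring
  have e4 : 6*(x+1)+4 = 6*x+10 := by ring
  have e5 : 6*(x+1)+5 = 6*x+11 := by ring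
  rw [hr0, hr1, hr2, hr3, hr4, hr5, hg1, hg2, e1, e2, e3, e4, e5]
  ring


lemma intA : (∫ x in Set.Ioo (0:ℝ) 1, ((x^(0:ℕ) - x^(4:ℕ))/(1 - x^(6:ℕ)))) = π/(2*Real.sqrt 3) := by
  have hae : ∀ᵐ x ∂(volume.restrict (Set.Ioo (0:ℝ) 1)),
      (x^(0:ℕ) - x^(4:ℕ))/(1 - x^(6:ℕ)) = (1/2)*(1/(x^2+x+1)) + (1/2)*(1/(x^2-x+1)) := by
    rw [MeasureTheory.ae_restrict_iff' measurableSet_Ioo]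
    filter_upwards with x hx
    have h6 : x^(6:ℕ) < 1 := pow_lt_one₀ hx.1.le hx.2 (by norm_num)
    have hne : 1 - x^(6:ℕ) ≠ 0 := ne_of_gt (by linarith)
    have hp1 : x^2+x+1 ≠ 0 := ne_of_gt (by nlinarith [sq_nonneg (x+1)])
    have hp2 : x^2-x+1 ≠ 0 := ne_of_gt (by nlinarith [sq_nonneg (x-1)])
    have hi1 : (x^2+x+1)*(1/(x^2+x+1)) = 1 := mul_one_div_cancel hp1
    have hi2 : (x^2-x+1)*(1/(x^2-x+1)) = 1 := mul_one_div_cancel hp2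
    rw [div_eq_iff hne]
    linear_combination (-(1/2)*(1-x^2)*(x^2-x+1)) * hi1 + (-(1/2)*(1-x^2)*(x^2+x+1)) * hi2
  rw [MeasureTheory.integral_congr_ae hae, ← MeasureTheory.integral_Ioc_eq_integral_Ioo,
    ← intervalIntegral.integral_of_le zero_le_one]
  have c1 : Continuous fun x : ℝ => 1/(x^2+x+1) :=
    continuous_const.div (by continuity) (fun x => ne_of_gt (by nlinarith [sq_nonneg (x+1)]))
  have c2 : Continuous fun x : ℝ => 1/(x^2-x+1) :=
    continuous_const.div (by continuity) (fun x => ne_of_gt (by nlinarith [sq_nonneg (x-1)]))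
  rw [intervalIntegral.integral_add (f := fun x : ℝ => 1/2 * (1/(x^2+x+1)))
      (g := fun x : ℝ => 1/2 * (1/(x^2-x+1))) ((continuous_const.mul c1).intervalIntegrable _ _)
      ((continuous_const.mul c2).intervalIntegrable _ _),
    intervalIntegral.integral_const_mul, intervalIntegral.integral_const_mul, I1, I2]
  have h3 := sqrt3_pos
  field_simp
  ring

lemma intB : (∫ x in Set.Ioo (0:ℝ) 1, ((x^(0:ℕ) - x^(1:ℕ))/(1 - x^(3:ℕ)))) = π/(3*Real.sqrt 3) := by
  have hae : ∀ᵐ x ∂(volume.restrict (Set.Ioo (0:ℝ) 1)),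
      (x^(0:ℕ) - x^(1:ℕ))/(1 - x^(3:ℕ)) = 1/(x^2+x+1) := by
    rw [MeasureTheory.ae_restrict_iff' measurableSet_Ioo]
    filter_upwards with x hx
    have h3 : x^(3:ℕ) < 1 := pow_lt_one₀ hx.1.le hx.2 (by norm_num)
    have hne : 1 - x^(3:ℕ) ≠ 0 := ne_of_gt (by linarith)
    have hp1 : x^2+x+1 ≠ 0 := ne_of_gt (by nlinarith [sq_nonneg (x+1)])
    have hi1 : (x^2+x+1)*(1/(x^2+x+1)) = 1 := mul_one_div_cancel hp1
    rw [div_eq_iff hne]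
    linear_combination (-(1-x)) * hi1
  rw [MeasureTheory.integral_congr_ae hae, ← MeasureTheory.integral_Ioc_eq_integral_Ioo,
    ← intervalIntegral.integral_of_le zero_le_one, I1]

lemma hs1 : HasSum (fun m : ℕ => 1/((6*(m:ℝ)+1)*(6*(m:ℝ)+5))) (π/(8*Real.sqrt 3)) := by
  have h := prog_hasSum 6 0 4 (by norm_num) (by norm_num)
  rw [intA] at h
  have h' : HasSum (fun m : ℕ => 1/(6*(m:ℝ)+1) - 1/(6*(m:ℝ)+5)) (π/(2*Real.sqrt 3)) :=
    h.congr_fun (fun m => by push_cast; ring)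
  have h4 := h'.mul_left (1/4)
  have hv : (1/4) * (π/(2*Real.sqrt 3)) = π/(8*Real.sqrt 3) := by
    rw [mul_comm, mul_one_div, div_div]
    congr 1
    ring
  rw [hv] at h4
  apply h4.congr_fun
  intro m
  have p1 : (6*(m:ℝ)+1) ≠ 0 := by positivity
  have p5 : (6*(m:ℝ)+5) ≠ 0 := by positivity
  field_simp
  ring

lemma hs2 : HasSum (fun m : ℕ => 1/((6*(m:ℝ)+2)*(6*(m:ℝ)+4))) (π/(12*Real.sqrt 3)) := by
  have h := prog_hasSum 3 0 1 (by norm_num) (by norm_num)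
  rw [intB] at h
  have h' : HasSum (fun m : ℕ => 1/(3*(m:ℝ)+1) - 1/(3*(m:ℝ)+2)) (π/(3*Real.sqrt 3)) :=
    h.congr_fun (fun m => by push_cast; ring)
  have h4 := h'.mul_left (1/4)
  have hv : (1/4) * (π/(3*Real.sqrt 3)) = π/(12*Real.sqrt 3) := by
    rw [mul_comm, mul_one_div, div_div]
    congr 1
    ring
  rw [hv] at h4
  apply h4.congr_fun
  intro m
  have p1 : (3*(m:ℝ)+1) ≠ 0 := by positivity
  have p2 : (3*(m:ℝ)+2) ≠ 0 := by positivity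
  have p3 : (6*(m:ℝ)+2) ≠ 0 := by positivity
  have p4 : (6*(m:ℝ)+4) ≠ 0 := by positivity
  field_simp
  ring

noncomputable def fterm (k : ℕ) : ℝ :=
  (((k : ℝ) + 1 - 3 * ((k / 6 : ℕ) : ℝ)) * (((k / 6 : ℕ) : ℝ) + 1)) /
    (((k : ℝ) + 1) * ((k : ℝ) + 2) * ((k : ℝ) + 6) * ((k : ℝ) + 7))

lemma fterm_le (k : ℕ) : 0 ≤ fterm k ∧ fterm k ≤ 1/((k:ℝ)+1)^2 := by
  unfold fterm
  have h6 : 3 * ((k/6 : ℕ):ℝ) ≤ (k:ℝ) := by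
    have : 3 * (k/6) ≤ k := by omega
    exact_mod_cast this
  have hμ : ((k/6 : ℕ):ℝ) ≤ (k:ℝ) := by exact_mod_cast Nat.div_le_self k 6
  have hμ0 : (0:ℝ) ≤ ((k/6 : ℕ):ℝ) := Nat.cast_nonneg _
  have hk : (0:ℝ) ≤ (k:ℝ) := Nat.cast_nonneg _
  have hD : (0:ℝ) < ((k:ℝ)+1)*((k:ℝ)+2)*((k:ℝ)+6)*((k:ℝ)+7) := by positivity
  constructor
  · apply div_nonneg _ hD.le
    apply mul_nonneg _ (by linarith)
    linarith
  · rw [div_le_div_iff₀ hD (by positivity)]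
    have hN : ((k:ℝ) + 1 - 3 * ((k/6 : ℕ):ℝ)) * (((k/6 : ℕ):ℝ) + 1) ≤ ((k:ℝ)+1)^2 := by
      nlinarith
    nlinarith [sq_nonneg ((k:ℝ)+1), mul_le_mul hN (le_refl (((k:ℝ)+1)^2)) (by positivity) (by nlinarith)]

lemma summable_fterm : Summable fterm := by
  have h0 : Summable (fun n : ℕ => 1/((n:ℝ))^2) :=
    summable_one_div_nat_pow.mpr (by norm_num)
  have h1 : Summable fun k : ℕ => 1 / ((k:ℝ)+1)^2 :=
    Summable.congr ((summable_nat_add_iff 1).mpr h0) (by intro n; push_cast; ring)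
  exact Summable.of_nonneg_of_le (fun k => (fterm_le k).1) (fun k => (fterm_le k).2) h1

lemma tendsto_Tr : Tendsto (fun n : ℕ => Tr n) atTop (𝓝 0) := by
  have hc : ∀ c : ℝ, Tendsto (fun n : ℕ => 1/(6*(n:ℝ)+c)) atTop (𝓝 0) := by
    intro c
    have h1 : Tendsto (fun n : ℕ => 6*(n:ℝ)+c) atTop atTop :=
      tendsto_atTop_add_const_right _ c
        (Tendsto.const_mul_atTop (by norm_num) tendsto_natCast_atTop_atTop)
    simpa [one_div, Pi.inv_def] using h1.inv_tendsto_atTop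
  unfold Tr
  have h := ((((((hc 1).const_mul (-7/360)).add ((hc 2).const_mul (1/180))).add
    ((hc 3).const_mul (1/80))).add ((hc 4).const_mul (1/45))).add ((hc 5).const_mul (5/144)))
  simpa using h

lemma htel (hsum : Summable (fun m : ℕ => Tr m - Tr ((m:ℝ)+1))) :
    HasSum (fun m : ℕ => Tr m - Tr ((m:ℝ)+1)) 0 := by
  have hnorm : Summable fun i : ℕ => ‖Tr i - Tr ((i:ℝ)+1)‖ := by
    simpa [Real.norm_eq_abs] using hsum.abs
  rw [hasSum_iff_tendsto_nat_of_summable_norm hnorm]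
  have hps : ∀ n : ℕ, ∑ i ∈ Finset.range n, (Tr i - Tr ((i:ℝ)+1)) = Tr 0 - Tr n := by
    intro n
    rw [show (Tr 0 : ℝ) = Tr ((0:ℕ):ℝ) by norm_num]
    rw [← Finset.sum_range_sub' (f := fun i : ℕ => Tr i) n]
    apply Finset.sum_congr rfl
    intro i _
    congr 2
    push_cast
    ring
  simp only [hps]
  have h0 : Tr 0 = 0 := by norm_num [Tr]
  rw [h0]
  simpa using tendsto_Tr.neg

set_option maxHeartbeats 2000000 in
theorem series_p6 :
    (∑' k : ℕ,
        (((k : ℝ) + 1 - 3 * ((k / 6 : ℕ) : ℝ)) * (((k / 6 : ℕ) : ℝ) + 1)) /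
          (((k : ℝ) + 1) * ((k : ℝ) + 2) * ((k : ℝ) + 6) * ((k : ℝ) + 7)))
      = 7 * π / (360 * Real.sqrt 3) := by
  change (∑' k : ℕ, fterm k) = 7 * π / (360 * Real.sqrt 3)
  have hsf := summable_fterm
  set e := (Nat.divModEquiv 6).symm with he
  have hsf' : Summable (fun p : ℕ × Fin 6 => fterm (e p)) := e.summable_iff.mpr hsf
  have hfib : HasSum (fun m : ℕ => ∑' r : Fin 6, fterm (e (m, r))) (∑' k, fterm k) := by
    have h1 := hsf'.hasSum.prod_fiberwise (fun m => (hsf'.prod_factor m).hasSum)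
    rwa [e.tsum_eq] at h1
  set g : ℕ → ℝ := fun m => ∑' r : Fin 6, fterm (e (m, r)) with hg
  have key : ∀ m : ℕ, g m = 2/15 * (1/((6*(m:ℝ)+1)*(6*(m:ℝ)+5)))
      + ((1/30) * (1/((6*(m:ℝ)+2)*(6*(m:ℝ)+4))) + (Tr m - Tr ((m:ℝ)+1))) := by
    intro m
    rw [← ratid (m:ℝ) (Nat.cast_nonneg m)]
    show (∑' r : Fin 6, fterm (e (m, r))) = _
    rw [tsum_fintype, Fin.sum_univ_six]
    have hev : ∀ c : ℕ, c < 6 → fterm (m*6+c) =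
        (3*(m:ℝ)+(c:ℝ)+1)*((m:ℝ)+1)/((6*(m:ℝ)+(c:ℝ)+1)*(6*(m:ℝ)+(c:ℝ)+2)*(6*(m:ℝ)+(c:ℝ)+6)*(6*(m:ℝ)+(c:ℝ)+7)) := by
      intro c hc
      unfold fterm
      have hd : (m*6+c)/6 = m := by omega
      rw [hd]
      push_cast
      ring
    have e0 := hev 0 (by norm_num)
    have e1 := hev 1 (by norm_num)
    have e2 := hev 2 (by norm_num)
    have e3 := hev 3 (by norm_num)
    have e4 := hev 4 (by norm_num)
    have e5 := hev 5 (by norm_num)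
    norm_num at e0 e1 e2 e3 e4 e5
    show fterm (m*6+0) + fterm (m*6+1) + fterm (m*6+2) + fterm (m*6+3) + fterm (m*6+4)
        + fterm (m*6+5) = _
    rw [show m*6+0 = m*6 by ring] at *
    rw [e0, e1, e2, e3, e4, e5]
    push_cast
    ring
  have hstel : Summable (fun m : ℕ => Tr m - Tr ((m:ℝ)+1)) := by
    have hgsum : Summable g := ⟨_, hfib⟩
    have hh : (fun m : ℕ => Tr m - Tr ((m:ℝ)+1)) = fun m => g m
        - (2/15 * (1/((6*(m:ℝ)+1)*(6*(m:ℝ)+5))) + (1/30) * (1/((6*(m:ℝ)+2)*(6*(m:ℝ)+4)))) := by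
      funext m; rw [key m]; ring
    rw [hh]
    exact hgsum.sub ((hs1.summable.mul_left _).add (hs2.summable.mul_left _))
  have hG : HasSum g (2/15 * (π/(8*Real.sqrt 3)) + ((1/30) * (π/(12*Real.sqrt 3)) + 0)) := by
    rw [funext key]
    exact (hs1.mul_left _).add ((hs2.mul_left _).add (htel hstel))
  rw [hfib.unique hG]
  have h3 := sqrt3_pos.ne'
  field_simp
  ring
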